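/- On two qubits, let Λ_NL be the coherent non-local box channel Λ_NL[ρ] = (1−p)|ψ₀⟩⟨ψ₀| + p|ψ₁⟩⟨ψ₁| with p = ⟨11|ρ|11⟩, |ψ₀⟩ = (|00⟩ + |11⟩)/√2, |ψ₁⟩ = (|01⟩ + |10⟩)/√2. For inputs x, y ∈ {0,1} define the correlators E(x,y) = Tr[ (σ_z ⊗ σ_z) · Λ_NL[|x⟩⟨x| ⊗ |y⟩⟨y|] ], where σ_z = diag(1,−1). Then E(0,0) + E(0,1) + E(1,0) − E(1,1) = 4, i.e., the CHSH expression attains its algebraic maximum 4, exceeding both the local-hidden-variable bound 2 and the Cirel'son bound 2√2. -/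
import Mathlib


open Matrix BigOperators
open scoped Kronecker ComplexOrder

noncomputable section

/-- Partial trace over the `A` factor. -/
def trA {A B : Type*} [Fintype A] (ρ : Matrix (A × B) (A × B) ℂ) : Matrix B B ℂ :=
  Matrix.of fun b b' => ∑ a, ρ (a, b) (a, b')

/-- Partial trace over the `B` factor. -/
def trB {A B : Type*} [Fintype B] (ρ : Matrix (A × B) (A × B) ℂ) : Matrix A A ℂ :=
  Matrix.of fun a a' => ∑ b, ρ (a, b) (a', b)

/-- A state: positive semidefinite matrix of trace 1. -/
def IsState {n : Type*} [Fintype n] (ρ : Matrix n n ℂ) : Prop :=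
  ρ.PosSemidef ∧ ρ.trace = 1

/-- A channel: a map admitting a Kraus representation `Λ[X] = ∑ i, K i * X * (K i)ᴴ`
with `∑ i, (K i)ᴴ * K i = 1` (completely positive and trace-preserving). -/
def IsChannel {n : Type*} [Fintype n] [DecidableEq n]
    (Λ : Matrix n n ℂ → Matrix n n ℂ) : Prop :=
  ∃ (m : ℕ) (K : Fin m → Matrix n n ℂ),
    (∀ X, Λ X = ∑ i, K i * X * (K i)ᴴ) ∧ (∑ i, (K i)ᴴ * K i = 1)

/-- The induced map `Γ ⊗ id` on the bipartite system, acting blockwise. -/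
def tensIdA {A B : Type*} (Γ : Matrix A A ℂ → Matrix A A ℂ)
    (ρ : Matrix (A × B) (A × B) ℂ) : Matrix (A × B) (A × B) ℂ :=
  Matrix.of fun p q => Γ (Matrix.of fun a a' => ρ (a, p.2) (a', q.2)) p.1 q.1

/-- The induced map `id ⊗ Γ` on the bipartite system, acting blockwise. -/
def tensIdB {A B : Type*} (Γ : Matrix B B ℂ → Matrix B B ℂ)
    (ρ : Matrix (A × B) (A × B) ℂ) : Matrix (A × B) (A × B) ℂ :=
  Matrix.of fun p q => Γ (Matrix.of fun b b' => ρ (p.1, b) (q.1, b')) p.2 q.2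

/-- `Λ` is A↛B semicausal: no channel applied by Alice beforehand affects Bob's
reduced output state. -/
def SemicausalAtoB {A B : Type*} [Fintype A] [Fintype B] [DecidableEq A]
    (Λ : Matrix (A × B) (A × B) ℂ → Matrix (A × B) (A × B) ℂ) : Prop :=
  ∀ ρ : Matrix (A × B) (A × B) ℂ, IsState ρ →
    ∀ Γ : Matrix A A ℂ → Matrix A A ℂ, IsChannel Γ →
      trA (Λ (tensIdA Γ ρ)) = trA (Λ ρ)

/-- `Λ` is A↚B semicausal: no channel applied by Bob beforehand affects Alice's
reduced output state. -/
def SemicausalBtoA {A B : Type*} [Fintype A] [Fintype B] [DecidableEq B]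
    (Λ : Matrix (A × B) (A × B) ℂ → Matrix (A × B) (A × B) ℂ) : Prop :=
  ∀ ρ : Matrix (A × B) (A × B) ℂ, IsState ρ →
    ∀ Γ : Matrix B B ℂ → Matrix B B ℂ, IsChannel Γ →
      trB (Λ (tensIdB Γ ρ)) = trB (Λ ρ)

/-- `Λ` is causal: both A↛B and A↚B semicausal. -/
def Causal {A B : Type*} [Fintype A] [Fintype B] [DecidableEq A] [DecidableEq B]
    (Λ : Matrix (A × B) (A × B) ℂ → Matrix (A × B) (A × B) ℂ) : Prop :=
  SemicausalAtoB Λ ∧ SemicausalBtoA Λ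

/-- The rank-one projector `|v⟩⟨v|` onto a vector `v`. -/
def projv {n : Type*} (v : n → ℂ) : Matrix n n ℂ :=
  Matrix.of fun i j => v i * star (v j)

/-- The tensor (Kronecker) product of two vectors. -/
def vtens {A B : Type*} (x : A → ℂ) (y : B → ℂ) : A × B → ℂ := fun p => x p.1 * y p.2

/-- `|ψ₀⟩ = (|00⟩ + |11⟩)/√2`. -/
def psi0 : Fin 2 × Fin 2 → ℂ :=
  fun p => if p.1 = p.2 then ((Real.sqrt 2 : ℂ))⁻¹ else 0

/-- `|ψ₁⟩ = (|01⟩ + |10⟩)/√2`. -/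
def psi1 : Fin 2 × Fin 2 → ℂ :=
  fun p => if p.1 ≠ p.2 then ((Real.sqrt 2 : ℂ))⁻¹ else 0

/-- The coherent quantum non-local box: on a state `ρ`,
`Λ_NL[ρ] = (1−p)|ψ₀⟩⟨ψ₀| + p|ψ₁⟩⟨ψ₁|` with `p = ⟨11|ρ|11⟩`. -/
def lamNL (X : Matrix (Fin 2 × Fin 2) (Fin 2 × Fin 2) ℂ) :
    Matrix (Fin 2 × Fin 2) (Fin 2 × Fin 2) ℂ :=
  (X.trace - X (1, 1) (1, 1)) • projv psi0 + X (1, 1) (1, 1) • projv psi1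

/-- The standard basis vector `|x⟩` of `ℂ²`. -/
def ket (x : Fin 2) : Fin 2 → ℂ := fun i => if i = x then 1 else 0

/-- The Pauli matrix `σ_z = diag(1, −1)`. -/
def sigmaZ : Matrix (Fin 2) (Fin 2) ℂ :=
  Matrix.of fun i j => if i = j then (if i = 0 then 1 else -1) else 0

/-- The correlator `E(x,y) = Tr[(σ_z ⊗ σ_z) · Λ_NL[|x⟩⟨x| ⊗ |y⟩⟨y|]]`. -/
def corr (x y : Fin 2) : ℂ :=
  ((sigmaZ ⊗ₖ sigmaZ) * lamNL (projv (vtens (ket x) (ket y)))).trace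

/-- the CHSH expression of the coherent non-local box attains the
algebraic maximum 4, exceeding the local-hidden-variable bound 2 and the Cirel'son
bound 2√2. -/
theorem stmt_19 :
    corr 0 0 + corr 0 1 + corr 1 0 - corr 1 1 = 4 ∧
    (2 : ℝ) < 4 ∧ 2 * Real.sqrt 2 < 4 := by
  refine ⟨?_, by norm_num, ?_⟩
  · have h2 : ((Real.sqrt 2 : ℂ))⁻¹ * ((Real.sqrt 2 : ℂ))⁻¹ = 1/2 := by
      rw [show ((Real.sqrt 2 : ℂ))⁻¹ = ((Real.sqrt 2)⁻¹ : ℝ) by push_cast; ring]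
      rw [← Complex.ofReal_mul, ← mul_inv,
        Real.mul_self_sqrt (by norm_num : (0:ℝ) ≤ 2)]
      norm_num
    simp only [corr, lamNL, Matrix.trace, Matrix.diag, Fin.sum_univ_two,
      Fintype.sum_prod_type, Matrix.mul_apply, Matrix.add_apply, Matrix.smul_apply,
      Matrix.kroneckerMap_apply, projv, psi0, psi1, vtens, ket, sigmaZ, Matrix.of_apply]
    norm_num [h2]
  · nlinarith [Real.sq_sqrt (by norm_num : (0:ℝ) ≤ 2), Real.sqrt_nonneg 2]
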